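/- arXiv:1012.4177 — 5 statements merged into one kernel-verified Lean document; each statement's English description precedes it below -/
import Mathlib

section
/- If H is a countable abelian group and Y is a countably infinite set, then the set Mono(H, T^Y) of injective group homomorphisms from H to T^Y is a dense G_δ-subset of Hom(H, T^Y), where T = ℝ/ℤ is the circle group and Hom(H, T^Y) carries the topology of pointwise convergence. -/
noncomputable def ratCircleToReal : AddCircle (1 : ℚ) →+ AddCircle (1 : ℝ) :=
  QuotientAddGroup.lift _
    ((QuotientAddGroup.mk' (AddSubgroup.zmultiples (1 : ℝ))).comp (Rat.castHom ℝ).toAddMonoidHom)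
    (by
      intro q hq
      obtain ⟨n, hn⟩ := AddSubgroup.mem_zmultiples_iff.mp hq
      rw [AddMonoidHom.mem_ker]
      simp only [AddMonoidHom.comp_apply, QuotientAddGroup.mk'_apply, RingHom.toAddMonoidHom_eq_coe,
        RingHom.coe_coe, Rat.cast_def]
      rw [QuotientAddGroup.eq_zero_iff]
      exact AddSubgroup.mem_zmultiples_iff.mpr ⟨n, by push_cast [← hn]; simp⟩)

lemma ratCircleToReal_inj : Function.Injective ratCircleToReal := by
  rw [injective_iff_map_eq_zero]
  intro a ha
  induction a using QuotientAddGroup.induction_on with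
  | H q =>
    rw [show ratCircleToReal ((q : AddCircle (1:ℚ))) =
      ((q : ℝ) : AddCircle (1:ℝ)) from rfl, QuotientAddGroup.eq_zero_iff] at ha
    obtain ⟨n, hn⟩ := AddSubgroup.mem_zmultiples_iff.mp ha
    rw [QuotientAddGroup.eq_zero_iff]
    refine AddSubgroup.mem_zmultiples_iff.mpr ⟨n, ?_⟩
    have h2 : ((n : ℚ) : ℝ) = (q : ℝ) := by push_cast; simpa using hn
    have h3 : (n : ℚ) = q := by exact_mod_cast h2
    simpa using h3


section CharEmb
variable (H : Type*) [AddCommGroup H]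
open scoped Classical

noncomputable def charFam : ∀ _ : H, CharacterModule H := fun h =>
  if hh : h = 0 then 0 else (CharacterModule.exists_character_apply_ne_zero_of_ne_zero hh).choose

lemma charFam_spec {h : H} (hh : h ≠ 0) : charFam H h h ≠ 0 := by
  rw [charFam, dif_neg hh]
  exact (CharacterModule.exists_character_apply_ne_zero_of_ne_zero hh).choose_spec

noncomputable def charEmb : H →+ (H → AddCircle (1 : ℝ)) where
  toFun x := fun h => ratCircleToReal (charFam H h x)
  map_zero' := by funext h; simp
  map_add' x y := by funext h; simp

lemma charEmb_inj : Function.Injective (charEmb H) := by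
  rw [injective_iff_map_eq_zero]
  intro a ha
  by_contra hne
  have h1 : ratCircleToReal (charFam H a a) = 0 := congrFun ha a
  have h2 : charFam H a a = 0 := (injective_iff_map_eq_zero _).mp ratCircleToReal_inj _ h1
  exact charFam_spec H hne h2

end CharEmb

/-- `Hom(H,K)` realized as the set of addition-preserving maps inside the function
space `H → K`; the subtype carries the topology of pointwise convergence. -/
def homSet (G K : Type*) [AddCommGroup G] [AddCommGroup K] : Set (G → K) :=
  {f | ∀ x y, f (x + y) = f x + f y}

/-- If `H` is a countable abelian group and `Y` is a countably infinite set, then the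
set of injective homomorphisms `Mono(H, 𝕋^Y)` is a dense `G_δ`-subset of
`Hom(H, 𝕋^Y)`, where `𝕋 = ℝ/ℤ`. -/
theorem stmt1 {H : Type*} [AddCommGroup H] [Countable H]
    (Y : Type*) [Countable Y] [Infinite Y] :
    IsGδ {f : ↥(homSet H (Y → AddCircle (1 : ℝ))) | Function.Injective f.1} ∧
    Dense {f : ↥(homSet H (Y → AddCircle (1 : ℝ))) | Function.Injective f.1} := by
  classical
  have hker : ∀ f : ↥(homSet H (Y → AddCircle (1 : ℝ))),
      Function.Injective f.1 ↔ ∀ h : H, h ≠ 0 → f.1 h ≠ 0 := by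
    intro f
    have h1 : Function.Injective (AddMonoidHom.mk' f.1 f.2) ↔
        ∀ a, (AddMonoidHom.mk' f.1 f.2) a = 0 → a = 0 := injective_iff_map_eq_zero _
    constructor
    · intro hi h hh hfh
      have hi' : Function.Injective (AddMonoidHom.mk' f.1 f.2) := hi
      exact hh (h1.mp hi' h hfh)
    · intro hi
      have : Function.Injective (AddMonoidHom.mk' f.1 f.2) :=
        h1.mpr fun a ha => by_contra fun hne => hi a hne ha
      exact this
  have hSet : {f : ↥(homSet H (Y → AddCircle (1 : ℝ))) | Function.Injective f.1} =
      ⋂ h : {h : H // h ≠ 0},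
        {f : ↥(homSet H (Y → AddCircle (1 : ℝ))) | f.1 h.1 ≠ 0} := by
    ext f
    constructor
    · intro hf
      exact Set.mem_iInter.mpr fun h => (hker f).mp hf h.1 h.2
    · intro hf
      exact (hker f).mpr fun h hh => Set.mem_iInter.mp hf ⟨h, hh⟩
  constructor
  · rw [hSet]
    refine IsGδ.iInter fun h => IsOpen.isGδ ?_
    have : {f : ↥(homSet H (Y → AddCircle (1 : ℝ))) | f.1 h.1 ≠ 0} =
        (fun f : ↥(homSet H (Y → AddCircle (1 : ℝ))) => f.1 h.1) ⁻¹' {0}ᶜ := rfl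
    rw [this]
    exact isOpen_compl_singleton.preimage
      ((continuous_apply h.1).comp continuous_subtype_val)
  · rw [dense_iff_inter_open]
    intro U hU hUne
    obtain ⟨V, hV, rfl⟩ := isOpen_induced_iff.mp hU
    obtain ⟨f, hf⟩ := hUne
    have hfV : f.1 ∈ V := hf
    have hVnhds : V ∈ nhds f.1 := hV.mem_nhds hfV
    rw [nhds_pi] at hVnhds
    obtain ⟨I, hIfin, t, ht, htV⟩ := Filter.mem_pi.mp hVnhds
    have hth : ∀ h : H, ∃ (J : Set Y) (s : Y → Set (AddCircle (1 : ℝ))),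
        J.Finite ∧ (∀ y, f.1 h y ∈ s y) ∧ J.pi s ⊆ t h := by
      intro h
      have h2 := ht h
      rw [nhds_pi] at h2
      obtain ⟨J, hJfin, s, hs, hsub⟩ := Filter.mem_pi.mp h2
      exact ⟨J, s, hJfin, fun y => mem_of_mem_nhds (hs y), hsub⟩
    choose J s hJfin hs hsub using hth
    set K : Set Y := ⋃ h ∈ I, J h with hK
    have hKfin : K.Finite := hIfin.biUnion fun h _ => hJfin h
    have hinf : (Kᶜ : Set Y).Infinite := hKfin.infinite_compl
    haveI := hinf.to_subtype
    obtain ⟨cnt, hcnt⟩ := exists_injective_nat H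
    set e : H → Y := fun h => ((Infinite.natEmbedding ↥(Kᶜ : Set Y)) (cnt h) : Y) with he
    have he_inj : Function.Injective e := fun a b hab =>
      hcnt ((Infinite.natEmbedding _).injective (Subtype.val_injective hab))
    have he_range : ∀ h, e h ∉ K := fun h =>
      ((Infinite.natEmbedding ↥(Kᶜ : Set Y)) (cnt h)).2
    set g : H → Y → AddCircle (1 : ℝ) :=
      fun x => Function.extend e (charEmb H x) (f.1 x) with hg
    have hg_hit : ∀ x h₀, g x (e h₀) = charEmb H x h₀ := fun x h₀ =>
      he_inj.extend_apply _ _ _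
    have hg_miss : ∀ x y, y ∉ Set.range e → g x y = f.1 x y := fun x y hy =>
      Function.extend_apply' _ _ _ (fun ⟨a, ha⟩ => hy ⟨a, ha⟩)
    have hg_mem : g ∈ homSet H (Y → AddCircle (1 : ℝ)) := by
      intro x y
      funext z
      by_cases hz : z ∈ Set.range e
      · obtain ⟨h₀, rfl⟩ := hz
        rw [Pi.add_apply, hg_hit, hg_hit, hg_hit, map_add, Pi.add_apply]
      · rw [Pi.add_apply, hg_miss _ _ hz, hg_miss _ _ hz, hg_miss _ _ hz, f.2 x y, Pi.add_apply]
    have hg_inj : Function.Injective g := by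
      intro a b hab
      apply charEmb_inj H
      funext h₀
      have h3 := congrFun hab (e h₀)
      rwa [hg_hit, hg_hit] at h3
    refine ⟨⟨g, hg_mem⟩, ?_, hg_inj⟩
    show g ∈ V
    apply htV
    refine Set.mem_pi.mpr fun h hI => ?_
    apply hsub h
    refine Set.mem_pi.mpr fun y hy => ?_
    have hyK : y ∈ K := Set.mem_biUnion hI hy
    have hyr : y ∉ Set.range e := fun ⟨a, ha⟩ => he_range a (ha ▸ hyK)
    rw [hg_miss h y hyr]
    exact hs h y
end

section
/- Let G be an abelian group, E a subset of G, κ an uncountable cardinal, X a set of cardinality κ, and n a natural number with n ≠ 1. Then the set Π = {π ∈ Hom(G, T^X) : π(E) is dense in (T[n])^X} contains no nonempty G_δ-subset of Hom(G, T^X). -/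
/-- In a doubly-indexed product space, an open set containing `f` contains every `g`
agreeing with `f` on `A × X₀` for some finite set `X₀` of second coordinates
(together with the finitely many relevant first coordinates; here we agree on all
first coordinates, which is enough). -/
lemma pi_pi_key {A X T : Type*} [TopologicalSpace T] {U : Set (A → X → T)}
    (hU : IsOpen U) {f : A → X → T} (hf : f ∈ U) :
    ∃ X₀ : Set X, X₀.Finite ∧
      ∀ g : A → X → T, (∀ a x, x ∈ X₀ → g a x = f a x) → g ∈ U := by
  classical
  obtain ⟨I, u, hu, hsub⟩ := isOpen_pi_iff.mp hU f hf
  have h2 : ∀ a ∈ I, ∃ (J : Finset X) (v : X → Set T),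
      (∀ x ∈ J, IsOpen (v x) ∧ f a x ∈ v x) ∧ (↑J : Set X).pi v ⊆ u a :=
    fun a ha => isOpen_pi_iff.mp (hu a ha).1 (f a) (hu a ha).2
  choose J v hJv hJsub using h2
  refine ⟨↑(I.biUnion fun a => if ha : a ∈ I then J a ha else ∅),
    (I.biUnion _).finite_toSet, ?_⟩
  intro g hg
  apply hsub
  intro a ha
  rw [Finset.mem_coe] at ha
  apply hJsub a ha
  intro x hx
  rw [Finset.mem_coe] at hx
  have hx' : x ∈ I.biUnion fun a => if ha : a ∈ I then J a ha else ∅ :=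
    Finset.mem_biUnion.mpr ⟨a, ha, by simpa [dif_pos ha] using hx⟩
  rw [hg a x hx']
  exact (hJv a ha x hx).2

/-- Let `G` be an abelian group, `E ⊆ G`, `X` an uncountable set (of cardinality `κ`)
and `n ≠ 1` a natural number.  Writing `𝕋[n]^X = {f : X → 𝕋 | ∀ x, n • f x = 0}`
(so `𝕋[0] = 𝕋`), the set
`Π = {π ∈ Hom(G, 𝕋^X) : π(E) is dense in 𝕋[n]^X}` contains no nonempty
`G_δ`-subset of `Hom(G, 𝕋^X)`. -/
theorem stmt3 {G : Type*} [AddCommGroup G] (E : Set G)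
    (X : Type*) [Uncountable X] (n : ℕ) (hn : n ≠ 1)
    (B : Set ↥(homSet G (X → AddCircle (1 : ℝ))))
    (hB : B ⊆ {π : ↥(homSet G (X → AddCircle (1 : ℝ))) |
        π.1 '' E ⊆ {f : X → AddCircle (1 : ℝ) | ∀ x, n • f x = 0} ∧
        {f : X → AddCircle (1 : ℝ) | ∀ x, n • f x = 0} ⊆ closure (π.1 '' E)})
    (hGδ : IsGδ B) :
    B = ∅ := by
  classical
  rw [Set.eq_empty_iff_forall_notMem]
  intro π hπB
  obtain ⟨T, hTopen, hTcount, hTeq⟩ := hGδ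
  haveI : Countable T := hTcount.to_subtype
  have hVex : ∀ t : T, ∃ V : Set (G → X → AddCircle (1 : ℝ)),
      IsOpen V ∧ Subtype.val ⁻¹' V = (t.1 : Set ↥(homSet G (X → AddCircle (1 : ℝ)))) :=
    fun t => isOpen_induced_iff.mp (hTopen t t.2)
  choose V hVopen hVpre using hVex
  have hπB' : π ∈ ⋂₀ T := hTeq ▸ hπB
  have hπV : ∀ t : T, π.1 ∈ V t := by
    intro t
    have h1 : π ∈ t.1 := hπB' t.1 t.2
    rw [← hVpre t] at h1
    exact h1
  have hkey : ∀ t : T, ∃ X₀ : Set X, X₀.Finite ∧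
      ∀ g, (∀ a x, x ∈ X₀ → g a x = π.1 a x) → g ∈ V t :=
    fun t => pi_pi_key (hVopen t) (hπV t)
  choose X₀ hX₀fin hX₀ using hkey
  have hcnt : (⋃ t : T, X₀ t).Countable :=
    Set.countable_iUnion fun t => (hX₀fin t).countable
  obtain ⟨x₀, hx₀⟩ : ∃ x : X, x ∉ ⋃ t : T, X₀ t := by
    by_contra h
    push_neg at h
    have huniv : (Set.univ : Set X).Countable :=
      Set.Countable.mono (fun x _ => h x) hcnt
    exact not_countable (Set.countable_univ_iff.mp huniv)
  -- the modified homomorphism, vanishing at coordinate `x₀`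
  set π' : G → X → AddCircle (1 : ℝ) :=
    fun a x => if x = x₀ then 0 else π.1 a x with hπ'def
  have hπ'mem : π' ∈ homSet G (X → AddCircle (1 : ℝ)) := by
    intro a b
    funext x
    by_cases hx : x = x₀
    · simp [hπ'def, hx]
    · simpa [hπ'def, hx] using congrFun (π.2 a b) x
  have hagrees : ∀ t : T, ∀ a x, x ∈ X₀ t → π' a x = π.1 a x := by
    intro t a x hx
    have hxne : x ≠ x₀ := by
      rintro rfl
      exact hx₀ (Set.mem_iUnion.mpr ⟨t, hx⟩)
    simp [hπ'def, hxne]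
  have hP'B : (⟨π', hπ'mem⟩ : ↥(homSet G (X → AddCircle (1 : ℝ)))) ∈ B := by
    rw [hTeq]
    intro t ht
    have h1 : π' ∈ V ⟨t, ht⟩ := hX₀ ⟨t, ht⟩ π' (hagrees ⟨t, ht⟩)
    have h2 : (⟨π', hπ'mem⟩ : ↥(homSet G (X → AddCircle (1 : ℝ)))) ∈
        Subtype.val ⁻¹' V ⟨t, ht⟩ := h1
    rwa [hVpre ⟨t, ht⟩] at h2
  obtain ⟨-, hdense⟩ := hB hP'B
  -- pick a nonzero `n`-torsion element of the circle
  obtain ⟨t₀, ht₀n, ht₀ne⟩ : ∃ t : AddCircle (1 : ℝ), n • t = 0 ∧ t ≠ 0 := by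
    rcases Nat.eq_zero_or_pos n with h0 | hpos
    · refine ⟨((1 / 2 : ℝ) : AddCircle (1 : ℝ)), by simp [h0], ?_⟩
      intro hzero
      rw [AddCircle.coe_eq_zero_iff] at hzero
      obtain ⟨k, hk⟩ := hzero
      rw [zsmul_eq_mul, mul_one] at hk
      have hk2 : (2 * k : ℤ) = (1 : ℤ) := by
        have : (2 * k : ℝ) = 1 := by rw [hk]; ring
        exact_mod_cast this
      omega
    · have h2n : 2 ≤ n := by omega
      have hn0 : (n : ℝ) ≠ 0 := by positivity
      refine ⟨((↑((1 : ℝ) / (n : ℝ)) : AddCircle (1 : ℝ))), ?_, ?_⟩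
      · show ((↑(n • ((1 : ℝ) / (n : ℝ))) : AddCircle (1 : ℝ))) = 0
        have h1 : (n • ((1 : ℝ) / (n : ℝ)) : ℝ) = 1 := by
          rw [nsmul_eq_mul]; field_simp
        rw [h1]
        exact AddCircle.coe_period 1
      · intro hzero
        rw [AddCircle.coe_eq_zero_iff] at hzero
        obtain ⟨k, hk⟩ := hzero
        rw [zsmul_eq_mul, mul_one] at hk
        have hpos1 : (0 : ℝ) < 1 / (n : ℝ) := by positivity
        have hlt1 : (1 / (n : ℝ)) < 1 := by
          rw [div_lt_one (by positivity)]
          exact_mod_cast by omega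
        have hk0 : (0 : ℤ) < k := by exact_mod_cast hk ▸ hpos1
        have hk1 : k < (1 : ℤ) := by exact_mod_cast hk ▸ hlt1
        omega
  -- the witness function, supported at `x₀`
  set f : X → AddCircle (1 : ℝ) := fun x => if x = x₀ then t₀ else 0 with hfdef
  have hfmem : f ∈ {f : X → AddCircle (1 : ℝ) | ∀ x, n • f x = 0} := by
    intro x
    by_cases hx : x = x₀ <;> simp [hfdef, hx, ht₀n]
  have hfcl : f ∈ closure (π' '' E) := hdense hfmem
  have hsub : π' '' E ⊆ {h : X → AddCircle (1 : ℝ) | h x₀ = 0} := by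
    rintro _ ⟨g, -, rfl⟩
    simp [hπ'def]
  have hclosed : IsClosed {h : X → AddCircle (1 : ℝ) | h x₀ = 0} :=
    isClosed_eq (continuous_apply x₀) continuous_const
  have hfx₀ : f x₀ = 0 := closure_minimal hsub hclosed hfcl
  rw [hfdef] at hfx₀
  simp at hfx₀
  exact ht₀ne hfx₀
end

section
/- For every infinite subset S of ℤ, there exists a translation f : T^𝔠 → T^𝔠 of the group T^𝔠 (i.e., f(x) = x + a for a fixed a ∈ T^𝔠) such that for every point x ∈ T^𝔠 the S-orbit {f^n(x) : n ∈ S} is dense in T^𝔠. -/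
lemma lemA (m : ℕ → ℤ) (hm1 : ∀ k, 1 ≤ m k) (hm : ∀ k : ℕ, ((k : ℤ)+2) * m k ≤ m (k+1)) (t : ℕ → ℝ) :
    ∃ α : ℝ, ∀ k, ∃ j : ℤ, |(m k : ℝ) * α - j - t k| ≤ 1/(k+2) := by
  have hmR : ∀ k, (1 : ℝ) ≤ (m k : ℝ) := fun k => by exact_mod_cast hm1 k
  have hmpos : ∀ k, (0 : ℝ) < (m k : ℝ) := fun k => lt_of_lt_of_le one_pos (hmR k)
  set r : ℕ → ℝ := fun k => 1 / (((k : ℝ)+2) * (m k : ℝ)) with hrdef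
  have hrpos : ∀ k, 0 < r k := by
    intro k
    exact div_pos one_pos (mul_pos (by positivity) (hmpos k))
  have hgap : ∀ k, 1 / (m (k+1) : ℝ) ≤ 2 * r k - 2 * r (k+1) := by
    intro k
    have hmR' : ((k:ℝ)+2) * (m k : ℝ) ≤ (m (k+1) : ℝ) := by exact_mod_cast hm k
    have hden : (0:ℝ) < ((k:ℝ)+2) * (m k : ℝ) := mul_pos (by positivity) (hmpos k)
    have h1 : 2 * r k ≥ 2 / (m (k+1) : ℝ) := by
      have := one_div_le_one_div_of_le hden hmR'
      have hrk : r k = 1 / (((k:ℝ)+2) * (m k : ℝ)) := rfl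
      rw [hrk]
      calc (2:ℝ) / (m (k+1):ℝ) = 2 * (1 / (m (k+1):ℝ)) := by ring
        _ ≤ 2 * (1 / (((k:ℝ)+2) * (m k:ℝ))) := by linarith
    have h2 : 2 * r (k+1) ≤ 1 / (m (k+1) : ℝ) := by
      have hrk : r (k+1) = 1 / ((((k:ℕ)+1 : ℕ):ℝ)+2) / (m (k+1) : ℝ) := by
        show (1 : ℝ) / _ = _
        rw [div_div]
      rw [hrk, ← mul_div_assoc]
      have hx : 2 * ((1:ℝ)/((((k:ℕ)+1 : ℕ):ℝ)+2)) ≤ 1 := by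
        have : (1:ℝ)/((((k:ℕ)+1 : ℕ):ℝ)+2) ≤ 1/2 := by
          apply one_div_le_one_div_of_le two_pos
          push_cast
          linarith
        linarith
      exact (div_le_div_iff_of_pos_right (hmpos (k+1))).mpr hx
    have h3 : (2:ℝ) / (m (k+1):ℝ) = 2 * (1 / (m (k+1):ℝ)) := by ring
    linarith
  -- the recursive centers
  let c : ℕ → ℝ := fun k => Nat.rec (t 0 / (m 0 : ℝ))
    (fun k ck => ((⌊(m (k+1) : ℝ) * (ck + r k - r (k+1)) - t (k+1)⌋ : ℝ) + t (k+1)) / (m (k+1) : ℝ)) k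
  have hcsucc : ∀ k, c (k+1) = ((⌊(m (k+1) : ℝ) * (c k + r k - r (k+1)) - t (k+1)⌋ : ℝ) + t (k+1)) / (m (k+1) : ℝ) := fun k => rfl
  have hc0 : c 0 = t 0 / (m 0 : ℝ) := rfl
  have hnest : ∀ k, c k - r k + r (k+1) ≤ c (k+1) ∧ c (k+1) ≤ c k + r k - r (k+1) := by
    intro k
    set X : ℝ := (m (k+1) : ℝ) * (c k + r k - r (k+1)) - t (k+1) with hX
    have hfl1 : (⌊X⌋ : ℝ) ≤ X := Int.floor_le X
    have hfl2 : X - 1 < (⌊X⌋ : ℝ) := Int.sub_one_lt_floor X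
    have hm' := hmpos (k+1)
    have h1m : 1 / (m (k+1):ℝ) * (m (k+1):ℝ) = 1 := by field_simp
    constructor
    · rw [hcsucc k, le_div_iff₀ hm']
      nlinarith [hgap k]
    · rw [hcsucc k, div_le_iff₀ hm']
      nlinarith
  have humono : Monotone (fun k => c k - r k) := by
    apply monotone_nat_of_le_succ
    intro k
    have h := (hnest k).1
    have := hrpos (k+1)
    linarith
  have hvanti : Antitone (fun k => c k + r k) := by
    apply antitone_nat_of_succ_le
    intro k
    have h := (hnest k).2
    have := hrpos (k+1)
    linarith
  have huv : ∀ k, c k - r k ≤ c k + r k := fun k => by have := hrpos k; linarith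
  have hbdd : BddAbove (Set.range fun k => c k - r k) := by
    refine ⟨c 0 + r 0, ?_⟩
    rintro x ⟨l, rfl⟩
    calc c l - r l ≤ c l + r l := huv l
      _ ≤ c 0 + r 0 := hvanti (Nat.zero_le l)
  set α : ℝ := ⨆ k, (c k - r k) with hα
  have hαmem : ∀ k, c k - r k ≤ α ∧ α ≤ c k + r k := by
    intro k
    constructor
    · exact le_ciSup hbdd k
    · apply ciSup_le
      intro l
      rcases le_total l k with h | h
      · exact le_trans (humono h) (huv k)
      · exact le_trans (huv l) (hvanti h)
  have hcint : ∀ k, ∃ j : ℤ, (m k : ℝ) * c k - t k = j := by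
    intro k
    cases k with
    | zero =>
      refine ⟨0, ?_⟩
      rw [hc0]
      have := (hmpos 0).ne'
      field_simp
      simp
    | succ k =>
      refine ⟨⌊(m (k+1) : ℝ) * (c k + r k - r (k+1)) - t (k+1)⌋, ?_⟩
      rw [hcsucc k]
      have := (hmpos (k+1)).ne'
      field_simp
      ring
  refine ⟨α, fun k => ?_⟩
  obtain ⟨j, hj⟩ := hcint k
  refine ⟨j, ?_⟩
  have h1 : (m k : ℝ) * α - j - t k = (m k : ℝ) * (α - c k) := by
    rw [← hj]; ring
  rw [h1, abs_mul, abs_of_pos (hmpos k)]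
  have h2 : |α - c k| ≤ r k := by
    have := hαmem k
    rw [abs_le]
    constructor <;> linarith [this.1, this.2]
  calc (m k : ℝ) * |α - c k| ≤ (m k : ℝ) * r k := by
        exact mul_le_mul_of_nonneg_left h2 (le_of_lt (hmpos k))
    _ ≤ 1 / ((k:ℝ)+2) := by
        have hrk : r k = 1 / (((k:ℝ)+2) * (m k : ℝ)) := rfl
        rw [hrk]
        have h := (hmpos k).ne'
        rw [mul_one_div, div_le_div_iff₀ (mul_pos (by positivity) (hmpos k)) (by positivity)]
        nlinarith [hmpos k]

lemma lemB (S : Set ℤ) (hub : ∀ B : ℤ, ∃ n ∈ S, B < n) :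
    ∃ m : ℕ → ℤ, (∀ k, m k ∈ S) ∧ (∀ k, 1 ≤ m k) ∧ ∀ k : ℕ, ((k:ℤ)+2) * m k ≤ m (k+1) := by
  choose f hfS hflt using hub
  let m : ℕ → ℤ := fun k => Nat.rec (f 0) (fun k mk => f (((k:ℤ)+2) * mk)) k
  have hm0 : m 0 = f 0 := rfl
  have hms : ∀ k, m (k+1) = f (((k:ℤ)+2) * m k) := fun _ => rfl
  have h1 : ∀ k, 1 ≤ m k := by
    intro k
    induction k with
    | zero => have := hflt 0; rw [hm0]; omega
    | succ k ih =>
      have h2 := hflt (((k:ℤ)+2) * m k)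
      rw [← hms k] at h2
      have hk : (0:ℤ) ≤ (k:ℤ) := Int.natCast_nonneg k
      nlinarith
  refine ⟨m, fun k => ?_, h1, fun k => ?_⟩
  · cases k with
    | zero => rw [hm0]; exact hfS 0
    | succ k => rw [hms k]; exact hfS _
  · have h2 := hflt (((k:ℤ)+2) * m k)
    rw [← hms k] at h2
    exact le_of_lt h2

lemma core (S : Set ℤ) (hub : ∀ B : ℤ, ∃ n ∈ S, B < n) :
    ∃ a : ℝ → AddCircle (1:ℝ), ∀ x : ℝ → AddCircle (1:ℝ),
      Dense ((fun n : ℤ => x + n • a) '' S) := by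
  classical
  obtain ⟨m, hmS, hm1, hmgrow⟩ := lemB S hub
  set L : ℕ → List (ℚ × ℚ × ℚ) :=
    fun k => Denumerable.ofNat (List (ℚ × ℚ × ℚ)) (Nat.unpair k).1 with hLdef
  set t : ℕ → ℝ → ℝ := fun k i =>
    ((L k).map (fun p => if (p.1 : ℝ) < i ∧ i < (p.2.1 : ℝ) then (p.2.2 : ℝ) else 0)).sum
    with htdef
  have key : ∀ i : ℝ, ∃ α : ℝ, ∀ k, ∃ j : ℤ, |(m k : ℝ) * α - j - t k i| ≤ 1/(k+2) :=
    fun i => lemA m hm1 hmgrow (fun k => t k i)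
  choose α hα using key
  refine ⟨fun i => ((α i : ℝ) : AddCircle (1:ℝ)), fun x => ?_⟩
  rw [dense_iff_inter_open]
  intro U hU hUne
  obtain ⟨y, hy⟩ := hUne
  obtain ⟨F, V, hV, hVsub⟩ := (isOpen_pi_iff.mp hU) y hy
  -- radii for each coordinate in F
  have hball : ∀ i ∈ F, ∃ ε : ℝ, 0 < ε ∧
      ∀ z : AddCircle (1:ℝ), dist z (y i - x i) < ε → x i + z ∈ V i := by
    intro i hi
    have hVo := (hV i hi).1
    have hyV := (hV i hi).2
    have hcont : Continuous (fun z : AddCircle (1:ℝ) => x i + z) :=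
      continuous_const.add continuous_id
    have hop : IsOpen ((fun z : AddCircle (1:ℝ) => x i + z) ⁻¹' V i) := hVo.preimage hcont
    have hmem : (y i - x i) ∈ ((fun z : AddCircle (1:ℝ) => x i + z) ⁻¹' V i) := by
      simp only [Set.mem_preimage, add_sub_cancel]
      exact hyV
    obtain ⟨ε, hε, hsub⟩ := Metric.isOpen_iff.mp hop _ hmem
    exact ⟨ε, hε, fun z hz => hsub hz⟩
  choose ε hεpos hεsub using hball
  -- a uniform positive lower bound ε0
  obtain ⟨ε0, hε0pos, hε0le⟩ : ∃ ε0 : ℝ, 0 < ε0 ∧ ∀ i (hi : i ∈ F), ε0 ≤ ε i hi := by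
    rcases F.attach.eq_empty_or_nonempty with h | h
    · refine ⟨1, one_pos, fun i hi => absurd (Finset.mem_attach F ⟨i, hi⟩) (by simp [h])⟩
    · obtain ⟨i0, -, hmin⟩ := Finset.exists_min_image F.attach (fun i => ε i.1 i.2) h
      exact ⟨ε i0.1 i0.2, hεpos i0.1 i0.2,
        fun i hi => hmin ⟨i, hi⟩ (Finset.mem_attach F ⟨i, hi⟩)⟩
  -- real lifts of the targets
  have hlift : ∀ i : ℝ, ∃ w : ℝ, ((w : ℝ) : AddCircle (1:ℝ)) = y i - x i :=
    fun i => Quotient.exists_rep (y i - x i)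
  choose w hw using hlift
  -- rational approximations of the targets
  have hratv : ∀ i : ℝ, ∃ v : ℚ, |w i - (v:ℝ)| < ε0/3 :=
    fun i => exists_rat_near (w i) (by positivity)
  choose v hv using hratv
  -- separation radius δ
  obtain ⟨δ, hδpos, hδsep⟩ : ∃ δ : ℝ, 0 < δ ∧
      ∀ i ∈ F, ∀ i' ∈ F, i ≠ i' → δ ≤ |i - i'| := by
    set D : Finset ℝ :=
      ((F ×ˢ F).filter (fun p => p.1 ≠ p.2)).image (fun p => |p.1 - p.2|) with hD
    rcases D.eq_empty_or_nonempty with h | h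
    · refine ⟨1, one_pos, fun i hi i' hi' hne => absurd ?_ (by simp [h] : |i - i'| ∉ D)⟩
      exact Finset.mem_image.mpr ⟨(i, i'), Finset.mem_filter.mpr
        ⟨Finset.mem_product.mpr ⟨hi, hi'⟩, hne⟩, rfl⟩
    · refine ⟨D.min' h, ?_, fun i hi i' hi' hne => ?_⟩
      · obtain ⟨p, hp, hpe⟩ := Finset.mem_image.mp (D.min'_mem h)
        have hne' : p.1 ≠ p.2 := (Finset.mem_filter.mp hp).2
        rw [← hpe]
        exact abs_pos.mpr (sub_ne_zero.mpr hne')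
      · exact D.min'_le _ (Finset.mem_image.mpr ⟨(i, i'), Finset.mem_filter.mpr
          ⟨Finset.mem_product.mpr ⟨hi, hi'⟩, hne⟩, rfl⟩)
  -- rational interval endpoints around each i ∈ F
  have hq : ∀ i : ℝ, ∃ q : ℚ, i - δ < (q:ℝ) ∧ (q:ℝ) < i := fun i => exists_rat_btwn (by linarith)
  have hq' : ∀ i : ℝ, ∃ q : ℚ, i < (q:ℝ) ∧ (q:ℝ) < i + δ := fun i => exists_rat_btwn (by linarith)
  choose q hq1 hq2 using hq
  choose q' hq'1 hq'2 using hq'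
  -- build the parameter list
  set L₀ : List (ℚ × ℚ × ℚ) := F.toList.map (fun i => (q i, q' i, v i)) with hL₀
  -- the value of t at L₀ on points of F
  have htval : ∀ N : ℕ, L (Nat.pair ((@Encodable.encode (List (ℚ × ℚ × ℚ)) Denumerable.toEncodable L₀)) N) = L₀ := by
    intro N
    rw [hLdef]
    simp only [Nat.unpair_pair]
    exact Denumerable.ofNat_encode L₀
  have htv : ∀ i ∈ F, ∀ N : ℕ, t (Nat.pair ((@Encodable.encode (List (ℚ × ℚ × ℚ)) Denumerable.toEncodable L₀)) N) i = (v i : ℝ) := by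
    intro i hi N
    rw [htdef]
    simp only [htval N]
    simp only [hL₀, List.map_map]
    rw [Finset.sum_map_toList]
    rw [Finset.sum_eq_single_of_mem i hi]
    · simp only [Function.comp_apply]
      rw [if_pos ⟨hq2 i, hq'1 i⟩]
    · intro i' hi' hne
      simp only [Function.comp_apply]
      rw [if_neg]
      rintro ⟨hlt1, hlt2⟩
      have hsep := hδsep i' hi' i hi hne
      have h1 : i' - δ < (q i' : ℝ) := hq1 i'
      have h2 : (q' i' : ℝ) < i' + δ := hq'2 i'
      rcases abs_cases (i' - i) with ⟨he, -⟩ | ⟨he, -⟩ <;> rw [he] at hsep <;> linarith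
  -- choose the index k
  obtain ⟨N, hN⟩ : ∃ N : ℕ, 1/((N:ℝ)+2) < ε0/3 := by
    obtain ⟨N, hN⟩ := exists_nat_gt (3/ε0)
    refine ⟨N, ?_⟩
    rw [div_lt_iff₀ (by positivity)]
    rw [div_lt_iff₀ hε0pos] at hN
    nlinarith
  set k₀ : ℕ := Nat.pair ((@Encodable.encode (List (ℚ × ℚ × ℚ)) Denumerable.toEncodable L₀)) N with hk₀
  have hk₀N : (N:ℝ) ≤ (k₀:ℝ) := by exact_mod_cast Nat.right_le_pair _ N
  have hk₀err : 1/((k₀:ℝ)+2) < ε0/3 := by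
    refine lt_of_le_of_lt ?_ hN
    apply one_div_le_one_div_of_le (by positivity)
    linarith
  -- the witness point
  refine ⟨x + (m k₀) • (fun i => ((α i : ℝ) : AddCircle (1:ℝ))), ?_, ⟨m k₀, hmS k₀, rfl⟩⟩
  apply hVsub
  intro i hi
  obtain ⟨j, hj⟩ := hα i k₀
  have hti : t k₀ i = (v i : ℝ) := htv i hi N
  -- compute the coordinate
  have hcoord : (x + (m k₀) • fun i => ((α i : ℝ) : AddCircle (1:ℝ))) i
      = x i + (m k₀) • ((α i : ℝ) : AddCircle (1:ℝ)) := rfl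
  rw [hcoord]
  apply hεsub i hi
  refine lt_of_lt_of_le ?_ (hε0le i hi)
  -- distance estimate
  have hz : (m k₀) • ((α i : ℝ) : AddCircle (1:ℝ)) - (y i - x i)
      = (((m k₀ : ℝ) * α i - j - w i : ℝ) : AddCircle (1:ℝ)) := by
    rw [← hw i, ← AddCircle.coe_zsmul]
    have : ((m k₀ : ℝ) * α i - j - w i : ℝ) = ((m k₀) • (α i) - w i) + (-j : ℤ) • (1:ℝ) := by
      push_cast [zsmul_eq_mul]
      ring
    rw [this, AddCircle.coe_add, AddCircle.coe_sub]
    have hz0 : (((-j : ℤ) • (1:ℝ) : ℝ) : AddCircle (1:ℝ)) = 0 :=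
      (AddCircle.coe_eq_zero_iff (1:ℝ)).mpr ⟨-j, rfl⟩
    rw [hz0, add_zero]
  rw [dist_eq_norm, hz]
  calc ‖(((m k₀ : ℝ) * α i - j - w i : ℝ) : AddCircle (1:ℝ))‖
      ≤ ‖((m k₀ : ℝ) * α i - j - w i : ℝ)‖ := QuotientAddGroup.norm_mk_le_norm
    _ = |(m k₀ : ℝ) * α i - j - w i| := Real.norm_eq_abs _
    _ ≤ |(m k₀ : ℝ) * α i - j - t k₀ i| + |t k₀ i - w i| := by
        have : (m k₀ : ℝ) * α i - j - w i
            = ((m k₀ : ℝ) * α i - j - t k₀ i) + (t k₀ i - w i) := by ring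
        rw [this]
        exact abs_add_le _ _
    _ < ε0/3 + ε0/3 := by
        have h1 : |(m k₀ : ℝ) * α i - j - t k₀ i| ≤ 1/((k₀:ℝ)+2) := hj
        have h2 : |t k₀ i - w i| < ε0/3 := by
          rw [hti, abs_sub_comm]
          exact hv i
        have := hk₀err
        apply add_lt_add_of_le_of_lt (le_of_lt (lt_of_le_of_lt h1 hk₀err)) h2
    _ ≤ ε0 := by linarith

/-- For every infinite `S ⊆ ℤ` there is a translation `f : x ↦ x + a` of
`𝕋^𝔠 = ℝ → AddCircle 1` such that for every point `x` the `S`-orbit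
`{f^n(x) : n ∈ S} = {x + n • a : n ∈ S}` is dense in `𝕋^𝔠`. -/
theorem stmt13 (S : Set ℤ) (hS : S.Infinite) :
    ∃ a : ℝ → AddCircle (1 : ℝ), ∀ x : ℝ → AddCircle (1 : ℝ),
      Dense ((fun n : ℤ => x + n • a) '' S) := by
  by_cases h : ∀ B : ℤ, ∃ n ∈ S, B < n
  · exact core S h
  · push_neg at h
    obtain ⟨B, hB⟩ := h
    have h2 : ∀ B' : ℤ, ∃ n ∈ S, n < B' := by
      intro B'
      by_contra hc
      push_neg at hc
      exact hS (Set.Finite.subset (Set.finite_Icc B' B) (fun n hn => ⟨hc n hn, hB n hn⟩))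
    set T : Set ℤ := Neg.neg ⁻¹' S with hT
    have hubT : ∀ B : ℤ, ∃ n ∈ T, B < n := by
      intro B0
      obtain ⟨n, hn, hlt⟩ := h2 (-B0)
      exact ⟨-n, by simpa [hT] using hn, by omega⟩
    obtain ⟨a, ha⟩ := core T hubT
    refine ⟨-a, fun x => ?_⟩
    have himg : ((fun n : ℤ => x + n • (-a)) '' S) = ((fun n : ℤ => x + n • a) '' T) := by
      ext z
      constructor
      · rintro ⟨n, hn, rfl⟩
        exact ⟨-n, by simpa [hT] using hn, by simp⟩
      · rintro ⟨n, hn, rfl⟩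
        refine ⟨-n, by simpa [hT] using hn, by simp⟩
    rw [himg]
    exact ha x
end

section
/- For every infinite set S of integers, there exists an indexed family {x_α : α < 𝔠} of reals in [0,1) with the following property: for every ε > 0, every k ∈ ℕ⁺, all reals y₁,…,y_k, and all distinct indices α₁,…,α_k < 𝔠, there exist s ∈ S and integers n₁,…,n_k such that |s·x_{α_j} − y_j − n_j| < ε for every j = 1,…,k. -/
lemma exists_large (S : Set ℤ) (hS : S.Infinite) (M : ℝ) : ∃ s ∈ S, M ≤ |(s:ℝ)| := by
  by_contra h
  push_neg at h
  have hsub : S ⊆ Set.Icc (-⌈M⌉) ⌈M⌉ := by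
    intro s hs
    have h2 : ((|s| : ℤ) : ℝ) < M := by rw [Int.cast_abs]; exact h s hs
    have h3 : |s| ≤ ⌈M⌉ := by exact_mod_cast h2.le.trans (Int.le_ceil M)
    rw [abs_le] at h3
    exact ⟨h3.1, h3.2⟩
  exact hS ((Set.finite_Icc _ _).subset hsub)

lemma shrink_exists (s : ℤ) (ε : ℝ) (p : ℝ × ℝ) (y : ℝ) :
    ∃ q : ℝ × ℝ, ∃ n : ℤ, p.1 < p.2 → 0 < ε → 2 ≤ |(s:ℝ)| * (p.2 - p.1) →
      p.1 ≤ q.1 ∧ q.1 < q.2 ∧ q.2 ≤ p.2 ∧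
        ∀ x ∈ Set.Icc q.1 q.2, |(s:ℝ)*x - y - n| < ε := by
  obtain ⟨a, b⟩ := p
  dsimp only
  by_cases hab : a < b
  swap
  · exact ⟨(0,0), 0, fun h => absurd h hab⟩
  by_cases hε : 0 < ε
  swap
  · exact ⟨(0,0), 0, fun _ h => absurd h hε⟩
  by_cases hsb : 2 ≤ |(s:ℝ)| * (b - a)
  swap
  · exact ⟨(0,0), 0, fun _ _ h => absurd h hsb⟩
  have hba : 0 < b - a := by linarith
  have hs0 : 0 < |(s:ℝ)| := by nlinarith [abs_nonneg (s:ℝ)]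
  set m : ℝ := min ε 1 / 2 with hm
  have hm0 : 0 < m := by positivity
  have hm1 : m ≤ 1/2 := by rw [hm]; have := min_le_right ε (1:ℝ); linarith
  have hmε : m < ε := by rw [hm]; have := min_le_left ε (1:ℝ); linarith
  set c : ℝ := min ((s:ℝ)*a) ((s:ℝ)*b) with hc
  set n : ℤ := ⌈c + 1 - y⌉ with hn
  set u : ℝ := y + n with hu
  have hu1 : c + 1 ≤ u := by have := Int.le_ceil (c + 1 - y); rw [hu]; linarith
  have hu2 : u < c + 2 := by
    have := Int.ceil_lt_add_one (c + 1 - y); rw [hu]; linarith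
  have key : (s:ℝ) ≠ 0 := fun h0 => by rw [h0, abs_zero] at hs0; exact lt_irrefl _ hs0
  have habs : ∀ x : ℝ, u - m ≤ (s:ℝ)*x → (s:ℝ)*x ≤ u → |(s:ℝ)*x - y - n| < ε := by
    intro x h1 h2
    have : (s:ℝ)*x - y - n = (s:ℝ)*x - u := by rw [hu]; ring
    rw [this, abs_sub_lt_iff]
    constructor <;> linarith
  rcases lt_or_gt_of_ne key with hsn | hsp
  · -- s < 0 : c = s*b
    have habs' : |(s:ℝ)| = -(s:ℝ) := abs_of_neg hsn
    have hc' : c = (s:ℝ)*b := by rw [hc, min_eq_right (by nlinarith)]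
    have husa : u ≤ (s:ℝ)*a := by
      have : c + |(s:ℝ)| * (b - a) = (s:ℝ)*a := by rw [hc', habs']; ring
      linarith
    have husb : (s:ℝ)*b + 1 ≤ u := by rw [hc'] at hu1; linarith
    refine ⟨(u/(s:ℝ), (u - m)/(s:ℝ)), n, fun _ _ _ => ?_⟩
    have h1 : a ≤ u/(s:ℝ) := (le_div_iff_of_neg hsn).2 (by linarith [husa])
    have h2 : (u - m)/(s:ℝ) ≤ b := (div_le_iff_of_neg hsn).2 (by nlinarith)
    have h3 : u/(s:ℝ) < (u - m)/(s:ℝ) := by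
      apply div_lt_div_of_neg_of_lt hsn; linarith
    refine ⟨h1, h3, h2, fun x hx => ?_⟩
    obtain ⟨hx1, hx2⟩ := hx
    have hxa : (s:ℝ)*x ≤ u := by
      have := (div_le_iff_of_neg hsn).1 hx1
      rw [mul_comm]; linarith
    have hxb : u - m ≤ (s:ℝ)*x := by
      have := (le_div_iff_of_neg hsn).1 hx2
      rw [mul_comm]; linarith
    exact habs x hxb hxa
  · -- s > 0 : c = s*a
    have habs' : |(s:ℝ)| = (s:ℝ) := abs_of_pos hsp
    have hc' : c = (s:ℝ)*a := by rw [hc, min_eq_left (by nlinarith)]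
    have husb : u ≤ (s:ℝ)*b := by
      have : c + |(s:ℝ)| * (b - a) = (s:ℝ)*b := by rw [hc', habs']; ring
      linarith
    have husa : (s:ℝ)*a + 1 ≤ u := by rw [hc'] at hu1; linarith
    refine ⟨((u - m)/(s:ℝ), u/(s:ℝ)), n, fun _ _ _ => ?_⟩
    have h1 : a ≤ (u - m)/(s:ℝ) := (le_div_iff₀ hsp).2 (by nlinarith)
    have h2 : u/(s:ℝ) ≤ b := (div_le_iff₀ hsp).2 (by linarith)
    have h3 : (u - m)/(s:ℝ) < u/(s:ℝ) := by
      apply div_lt_div_of_pos_right (by linarith) hsp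
    refine ⟨h1, h3, h2, fun x hx => ?_⟩
    obtain ⟨hx1, hx2⟩ := hx
    have hxa : u - m ≤ (s:ℝ)*x := by
      have := (div_le_iff₀ hsp).1 hx1
      rw [mul_comm]; linarith
    have hxb : (s:ℝ)*x ≤ u := by
      have := (le_div_iff₀ hsp).1 hx2
      rw [mul_comm]; linarith
    exact habs x hxa hxb

abbrev Req := Σ k : ℕ, (Fin k → List Bool) × (Fin k → ℚ)

lemma exists_e : ∃ e : ℕ → Req, ∀ (r : Req) (N : ℕ), ∃ m, N ≤ m ∧ e m = r := by
  have : Countable Req := by infer_instance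
  obtain ⟨f, hf⟩ := exists_surjective_nat Req
  refine ⟨fun n => f (Nat.unpair n).2, fun r N => ?_⟩
  obtain ⟨m₀, hm₀⟩ := hf r
  exact ⟨Nat.pair N m₀, Nat.left_le_pair N m₀, by simp only [Nat.unpair_pair]; exact hm₀⟩

def Extends (β : ℕ → Bool) (t : List Bool) : Prop := ∀ i : Fin t.length, β i = t.get i

lemma extends_of_agree {β γ : ℕ → Bool} {t : List Bool} {m : ℕ} (hlen : t.length ≤ m)
    (hag : ∀ i < m, β i = γ i) (h : Extends β t) : Extends γ t := fun i =>
  (hag i (lt_of_lt_of_le i.2 hlen)).symm.trans (h i)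

lemma extends_unique {k : ℕ} (σ : Fin k → List Bool)
    (hlen : ∀ j j', (σ j).length = (σ j').length) (hinj : Function.Injective σ)
    {γ : ℕ → Bool} {j j' : Fin k} (hj : Extends γ (σ j)) (hj' : Extends γ (σ j')) : j = j' := by
  apply hinj
  apply List.ext_get (hlen j j')
  intro i h1 h2
  have e1 := hj ⟨i, h1⟩
  have e2 := hj' ⟨i, h2⟩
  simp only at e1 e2
  rw [← e1, ← e2]

def TInv (m : ℕ) (A : (ℕ → Bool) → ℝ × ℝ) : Prop :=
  (∀ β γ, (∀ i < m, β i = γ i) → A β = A γ) ∧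
  ∀ β, 0 ≤ (A β).1 ∧ (A β).1 < (A β).2 ∧ (A β).2 ≤ 1/2

def Valid (r : Req) (m : ℕ) : Prop :=
  (∀ j j', (r.2.1 j).length = (r.2.1 j').length) ∧ (∀ j, (r.2.1 j).length ≤ m) ∧
    Function.Injective r.2.1

lemma step_lemma (S : Set ℤ) (hS : S.Infinite) (m : ℕ) (r : Req) (A : (ℕ → Bool) → ℝ × ℝ) :
    ∃ A' : (ℕ → Bool) → ℝ × ℝ, TInv m A →
      TInv (m+1) A' ∧ (∀ β, (A β).1 ≤ (A' β).1 ∧ (A' β).2 ≤ (A β).2) ∧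
        (Valid r m → ∃ s ∈ S, ∀ j : Fin r.1, ∀ β : ℕ → Bool, Extends β (r.2.1 j) →
          ∃ n : ℤ, ∀ x ∈ Set.Icc (A' β).1 (A' β).2,
            |(s:ℝ)*x - (r.2.2 j : ℝ) - n| < 1/(m+1)) := by
  by_cases hI : TInv m A
  swap
  · exact ⟨A, fun h => absurd h hI⟩
  obtain ⟨hfac, hbd⟩ := hI
  by_cases hv : Valid r m
  swap
  · refine ⟨A, fun _ => ⟨⟨fun β γ hag => hfac β γ (fun i hi => hag i (by omega)), hbd⟩,
      fun β => ⟨le_refl _, le_refl _⟩, fun h => absurd h hv⟩⟩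
  obtain ⟨hv1, hv2, hv3⟩ := hv
  -- minimum length
  classical
  set ext : (Fin m → Bool) → (ℕ → Bool) := fun v i => if h : i < m then v ⟨i, h⟩ else false with hext
  have hAres : ∀ β, A β = A (ext (fun i : Fin m => β i)) := by
    intro β
    apply hfac
    intro i hi
    simp [hext, hi]
  have hne : (Finset.univ : Finset (Fin m → Bool)).Nonempty := Finset.univ_nonempty
  set δ := Finset.univ.inf' hne (fun v => (A (ext v)).2 - (A (ext v)).1) with hδ
  have hδ0 : 0 < δ := (Finset.lt_inf'_iff hne).2 (fun v _ => by have := (hbd (ext v)).2.1; linarith)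
  have hδle : ∀ β, δ ≤ (A β).2 - (A β).1 := by
    intro β
    rw [hAres β]
    exact Finset.inf'_le (fun v => (A (ext v)).2 - (A (ext v)).1) (Finset.mem_univ (fun i : Fin m => β i))
  obtain ⟨s, hsS, hsM⟩ := exists_large S hS (2/δ)
  have hslen : ∀ β, 2 ≤ |(s:ℝ)| * ((A β).2 - (A β).1) := by
    intro β
    have h1 : 2/δ * δ ≤ |(s:ℝ)| * ((A β).2 - (A β).1) :=
      mul_le_mul hsM (hδle β) hδ0.le (abs_nonneg _)
    rwa [div_mul_cancel₀ _ (ne_of_gt hδ0)] at h1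
  have hε : (0:ℝ) < 1/(m+1:ℝ) := by positivity
  choose Q N hQ using fun (p : ℝ × ℝ) (y : ℝ) => shrink_exists s (1/(m+1:ℝ)) p y
  have hQspec : ∀ β y, (A β).1 ≤ (Q (A β) y).1 ∧ (Q (A β) y).1 < (Q (A β) y).2 ∧
      (Q (A β) y).2 ≤ (A β).2 ∧ ∀ x ∈ Set.Icc (Q (A β) y).1 (Q (A β) y).2,
        |(s:ℝ)*x - y - (N (A β) y)| < 1/(m+1:ℝ) :=
    fun β y => hQ (A β) y (hbd β).2.1 hε (hslen β)
  refine ⟨fun β => if h : ∃ j, Extends β (r.2.1 j) then Q (A β) (r.2.2 h.choose) else A β,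
    fun _ => ?_⟩
  set A' : (ℕ → Bool) → ℝ × ℝ :=
    fun β => if h : ∃ j, Extends β (r.2.1 j) then Q (A β) (r.2.2 h.choose) else A β with hA'
  have hmatch : ∀ β (h : ∃ j, Extends β (r.2.1 j)),
      A' β = Q (A β) (r.2.2 h.choose) := fun β h => dif_pos h
  have hnomatch : ∀ β, ¬(∃ j, Extends β (r.2.1 j)) → A' β = A β := fun β h => dif_neg h
  have hcase : ∀ β, A' β = A β ∨ ∃ y, A' β = Q (A β) y := by
    intro β
    by_cases h : ∃ j, Extends β (r.2.1 j)
    · exact Or.inr ⟨_, hmatch β h⟩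
    · exact Or.inl (hnomatch β h)
  have hnest : ∀ β, (A β).1 ≤ (A' β).1 ∧ (A' β).2 ≤ (A β).2 := by
    intro β
    rcases hcase β with h | ⟨y, h⟩
    · rw [h]; exact ⟨le_refl _, le_refl _⟩
    · rw [h]; exact ⟨(hQspec β y).1, (hQspec β y).2.2.1⟩
  have hbd' : ∀ β, 0 ≤ (A' β).1 ∧ (A' β).1 < (A' β).2 ∧ (A' β).2 ≤ 1/2 := by
    intro β
    have h0 := hbd β
    have h1 := hnest β
    rcases hcase β with h | ⟨y, h⟩
    · rw [h]; exact h0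
    · rw [h] at h1 ⊢
      exact ⟨h0.1.trans h1.1, (hQspec β y).2.1, h1.2.trans h0.2.2⟩
  refine ⟨⟨?_, hbd'⟩, hnest, fun _ => ?_⟩
  · -- factoring at m+1
    intro β γ hag
    have hag' : ∀ i < m, β i = γ i := fun i hi => hag i (by omega)
    have hAβγ : A β = A γ := hfac β γ hag'
    by_cases h1 : ∃ j, Extends β (r.2.1 j)
    · have h2 : ∃ j, Extends γ (r.2.1 j) :=
        ⟨h1.choose, extends_of_agree (hv2 _) hag' h1.choose_spec⟩
      rw [hmatch β h1, hmatch γ h2, hAβγ]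
      have hch : h1.choose = h2.choose :=
        extends_unique _ hv1 hv3 (extends_of_agree (hv2 _) hag' h1.choose_spec) h2.choose_spec
      rw [hch]
    · have h2 : ¬∃ j, Extends γ (r.2.1 j) := by
        intro h2
        exact h1 ⟨h2.choose, extends_of_agree (hv2 _) (fun i hi => (hag' i hi).symm) h2.choose_spec⟩
      rw [hnomatch β h1, hnomatch γ h2, hAβγ]
  · -- guarantee
    refine ⟨s, hsS, fun j β hextj => ?_⟩
    have h1 : ∃ j', Extends β (r.2.1 j') := ⟨j, hextj⟩
    have hch : h1.choose = j := extends_unique _ hv1 hv3 h1.choose_spec hextj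
    refine ⟨N (A β) (r.2.2 j), ?_⟩
    rw [hmatch β h1, hch]
    exact (hQspec β (r.2.2 j)).2.2.2

lemma extends_ofFn (β : ℕ → Bool) (l : ℕ) :
    Extends β (List.ofFn fun i : Fin l => β i) := by
  intro i
  simp [List.get_ofFn]

/-- For every infinite set `S` of integers there is a family `{x_α : α < 𝔠}` of reals
in `[0,1)` (indexed by `ℝ`, a set of cardinality `𝔠`) such that: for every `ε > 0`,
every `k ∈ ℕ⁺`, all reals `y₁, …, y_k` and all distinct indices `α₁, …, α_k`, there
exist `s ∈ S` and integers `n₁, …, n_k` with `|s • x_{α_j} − y_j − n_j| < ε` for all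
`j`. -/
theorem stmt14 (S : Set ℤ) (hS : S.Infinite) :
    ∃ x : ℝ → ℝ, (∀ α : ℝ, x α ∈ Set.Ico (0 : ℝ) 1) ∧
      ∀ ε : ℝ, 0 < ε → ∀ k : ℕ, 0 < k → ∀ y : Fin k → ℝ, ∀ α : Fin k → ℝ,
        Function.Injective α →
          ∃ s ∈ S, ∃ n : Fin k → ℤ,
            ∀ j : Fin k, |(s : ℝ) * x (α j) - y j - (n j : ℝ)| < ε := by
  classical
  obtain ⟨g⟩ : Nonempty (ℝ ↪ (ℕ → Bool)) := by
    rw [← Cardinal.le_def, Cardinal.mk_real, Cardinal.mk_arrow, Cardinal.mk_bool, Cardinal.mk_nat,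
      Cardinal.lift_id, Cardinal.lift_id, Cardinal.continuum]
  obtain ⟨e, he⟩ := exists_e
  choose step hstep using fun (m : ℕ) A => step_lemma S hS m (e m) A
  obtain ⟨F, hF0, hFs⟩ : ∃ F : ℕ → ((ℕ → Bool) → ℝ × ℝ),
      F 0 = (fun _ => ((0:ℝ), (1/2:ℝ))) ∧ ∀ m, F (m+1) = step m (F m) :=
    ⟨fun m => Nat.rec (fun _ => ((0:ℝ), (1/2:ℝ))) (fun m A => step m A) m, rfl, fun _ => rfl⟩
  have hInv : ∀ m, TInv m (F m) := by
    intro m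
    induction m with
    | zero => rw [hF0]; exact ⟨fun β γ _ => rfl, fun β => by norm_num⟩
    | succ m ih => rw [hFs]; exact (hstep m (F m) ih).1
  have hnest : ∀ m β, (F m β).1 ≤ (F (m+1) β).1 ∧ (F (m+1) β).2 ≤ (F m β).2 := by
    intro m β
    rw [hFs]
    exact (hstep m (F m) (hInv m)).2.1 β
  have hguar : ∀ m, Valid (e m) m → ∃ s ∈ S, ∀ j : Fin (e m).1, ∀ β : ℕ → Bool,
      Extends β ((e m).2.1 j) → ∃ n : ℤ, ∀ x ∈ Set.Icc (F (m+1) β).1 (F (m+1) β).2,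
        |(s:ℝ)*x - ((e m).2.2 j : ℝ) - n| < 1/(m+1:ℝ) := by
    intro m
    rw [hFs]
    exact (hstep m (F m) (hInv m)).2.2
  have haMon : ∀ β, Monotone fun m => (F m β).1 :=
    fun β => monotone_nat_of_le_succ (fun m => (hnest m β).1)
  have hbAnti : ∀ β, Antitone fun m => (F m β).2 :=
    fun β => antitone_nat_of_succ_le (fun m => (hnest m β).2)
  have hab : ∀ m β, (F m β).1 ≤ (F m β).2 := fun m β => ((hInv m).2 β).2.1.le
  have hcross : ∀ p q β, (F p β).1 ≤ (F q β).2 := fun p q β =>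
    ((haMon β (le_max_left p q)).trans (hab (max p q) β)).trans (hbAnti β (le_max_right p q))
  set x' : (ℕ → Bool) → ℝ := fun β => ⨆ m, (F m β).1 with hx'
  have hbdd : ∀ β, BddAbove (Set.range fun m => (F m β).1) := by
    intro β
    refine ⟨1/2, ?_⟩
    rintro _ ⟨m, rfl⟩
    exact (hab m β).trans ((hInv m).2 β).2.2
  have hmem : ∀ m β, x' β ∈ Set.Icc (F m β).1 (F m β).2 :=
    fun m β => ⟨le_ciSup (hbdd β) m, ciSup_le fun p => hcross p m β⟩
  refine ⟨fun α => x' (g α), ?_, ?_⟩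
  · intro α
    have h0 := hmem 0 (g α)
    rw [hF0] at h0
    exact ⟨h0.1, lt_of_le_of_lt h0.2 (by norm_num)⟩
  intro ε hε k hk y α hinj
  -- distinct branches
  have hgne : ∀ j j' : Fin k, j ≠ j' → g (α j) ≠ g (α j') := by
    intro j j' hjj' h
    exact hjj' (hinj (g.injective h))
  choose d hd using fun (p : Fin k × Fin k) =>
    (show ∃ i : ℕ, g (α p.1) ≠ g (α p.2) → g (α p.1) i ≠ g (α p.2) i from by
      by_cases h : g (α p.1) = g (α p.2)
      · exact ⟨0, fun h' => absurd h h'⟩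
      · obtain ⟨i, hi⟩ := Function.ne_iff.1 h
        exact ⟨i, fun _ => hi⟩)
  set l : ℕ := (Finset.univ.sup fun p : Fin k × Fin k => d p) + 1 with hl
  have hdl : ∀ p : Fin k × Fin k, d p < l := by
    intro p
    have h : d p ≤ Finset.univ.sup fun p : Fin k × Fin k => d p :=
      Finset.le_sup (Finset.mem_univ p)
    omega
  set τ : Fin k → List Bool := fun j => List.ofFn (fun i : Fin l => g (α j) i) with hτ
  have hτlen : ∀ j, (τ j).length = l := fun j => List.length_ofFn
  have hτinj : Function.Injective τ := by
    intro j j' hjj'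
    by_contra hne
    have h1 : (fun i : Fin l => g (α j) (i:ℕ)) = (fun i : Fin l => g (α j') (i:ℕ)) :=
      List.ofFn_inj.1 hjj'
    have h2 := congrFun h1 ⟨d (j, j'), hdl (j, j')⟩
    exact hd (j, j') (hgne j j' hne) h2
  -- rational targets and accuracy
  choose y' hy' using fun j => exists_rat_near (y j) (half_pos hε)
  obtain ⟨N, hN⟩ : ∃ N : ℕ, 1/(N+1:ℝ) < ε/2 := exists_nat_one_div_lt (half_pos hε)
  obtain ⟨m, hmN, hme⟩ := he ⟨k, τ, y'⟩ (max l N)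
  have hg := hguar m
  rw [hme] at hg
  have hval : Valid (⟨k, τ, y'⟩ : Req) m := by
    refine ⟨fun j j' => by rw [hτlen, hτlen], fun j => ?_, hτinj⟩
    rw [hτlen]
    exact le_trans (le_max_left l N) hmN
  obtain ⟨s, hsS, hsg⟩ := hg hval
  have hextj : ∀ j : Fin k, Extends (g (α j)) (τ j) :=
    fun j => extends_ofFn (g (α j)) l
  choose n hn using fun j => hsg j (g (α j)) (hextj j)
  refine ⟨s, hsS, n, fun j => ?_⟩
  have hx := hn j (x' (g (α j))) (hmem (m+1) (g (α j)))
  have hacc : 1/(m+1:ℝ) ≤ 1/(N+1:ℝ) := by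
    apply one_div_le_one_div_of_le (by positivity)
    have : N ≤ m := le_trans (le_max_right l N) hmN
    exact_mod_cast by omega
  have hyj : |(y' j : ℝ) - y j| < ε/2 := by
    rw [abs_sub_comm]
    exact hy' j
  have heq : (s:ℝ) * x' (g (α j)) - y j - (n j : ℝ) =
      ((s:ℝ) * x' (g (α j)) - (y' j : ℝ) - (n j : ℝ)) + ((y' j : ℝ) - y j) := by ring
  rw [heq]
  calc |((s:ℝ) * x' (g (α j)) - (y' j : ℝ) - (n j : ℝ)) + ((y' j : ℝ) - y j)|
      ≤ |(s:ℝ) * x' (g (α j)) - (y' j : ℝ) - (n j : ℝ)| + |(y' j : ℝ) - y j| := abs_add_le _ _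
    _ < ε := by linarith [hx, hyj, lt_of_le_of_lt hacc hN]
end

section
/- Let G be an abelian group, K a compact metrizable abelian group, and S = {a_n : n ∈ ℕ} a one-to-one sequence in G. Then the set U(S,K) = {h ∈ Hom(G,K) : the sequence (h(a_n))_n is uniformly distributed in K} is an F_σδ-subset of Hom(G,K). -/
open MeasureTheory Filter

/-- A sequence `x` in a compact abelian topological group `K` with normalized Haar
measure `μ` is uniformly distributed if `(1/n) ∑_{j<n} f(x_j) → ∫ f dμ` for every
continuous `f : K → ℂ`. -/
def UniformlyDistributed {K : Type*} [TopologicalSpace K] [MeasurableSpace K]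
    (μ : Measure K) (x : ℕ → K) : Prop :=
  ∀ f : C(K, ℂ), Tendsto (fun n : ℕ => (n : ℂ)⁻¹ * ∑ j ∈ Finset.range n, f (x j))
    atTop (nhds (∫ k, f k ∂μ))

/-- A set is `F_σδ` if it is a countable intersection of countable unions of closed
sets. -/
def IsFsigmaDelta {X : Type*} [TopologicalSpace X] (s : Set X) : Prop :=
  ∃ F : ℕ → ℕ → Set X, (∀ i j, IsClosed (F i j)) ∧ s = ⋂ i, ⋃ j, F i j

/-- For an abelian group `G`, a compact metrizable abelian group `K` with normalized
Haar measure `μ`, and a one-to-one sequence `S = {a_n : n ∈ ℕ}` in `G`, the set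
`𝕌(S,K) = {h ∈ Hom(G,K) : (h(a_n))_n is uniformly distributed in K}` is an
`F_σδ`-subset of `Hom(G,K)`. -/
theorem stmt18 {G K : Type*} [AddCommGroup G] [AddCommGroup K]
    [TopologicalSpace K] [IsTopologicalAddGroup K] [CompactSpace K]
    [TopologicalSpace.MetrizableSpace K] [MeasurableSpace K] [BorelSpace K]
    (μ : Measure K) [μ.IsAddHaarMeasure] [IsProbabilityMeasure μ]
    (a : ℕ → G) (ha : Function.Injective a) :
    IsFsigmaDelta {h : ↥(homSet G K) | UniformlyDistributed μ (fun n => h.1 (a n))} := by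
  classical
  letI : MetricSpace K := TopologicalSpace.metrizableSpaceMetric K
  -- the averaging maps
  set X := ↥(homSet G K)
  set A : C(K, ℂ) → X → ℕ → ℂ :=
    fun f h n => (n : ℂ)⁻¹ * ∑ j ∈ Finset.range n, f (h.1 (a j)) with hA
  have hAcont : ∀ (f : C(K, ℂ)) (n : ℕ), Continuous (fun h : X => A f h n) := by
    intro f n
    apply Continuous.mul continuous_const
    apply continuous_finset_sum
    intro j _
    exact f.continuous.comp ((continuous_apply (a j)).comp continuous_subtype_val)
  -- integrability of continuous functions
  have hint : ∀ f : C(K, ℂ), Integrable (fun k => f k) μ := by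
    intro f
    exact f.continuous.integrable_of_hasCompactSupport
      ((isClosed_tsupport _).isCompact)
  -- basic bound: averages differ by at most dist f g
  have havg : ∀ (f g : C(K, ℂ)) (h : X) (n : ℕ),
      dist (A f h n) (A g h n) ≤ dist f g := by
    intro f g h n
    rw [dist_eq_norm, hA]
    simp only
    rw [← mul_sub, ← Finset.sum_sub_distrib, norm_mul]
    calc ‖(n : ℂ)⁻¹‖ * ‖∑ j ∈ Finset.range n, (f (h.1 (a j)) - g (h.1 (a j)))‖
        ≤ ‖(n : ℂ)⁻¹‖ * ∑ j ∈ Finset.range n, dist f g := by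
          gcongr
          refine le_trans (norm_sum_le _ _) (Finset.sum_le_sum fun j _ => ?_)
          rw [← dist_eq_norm]
          exact ContinuousMap.dist_apply_le_dist _
      _ = ‖(n : ℂ)⁻¹‖ * (n * dist f g) := by
          rw [Finset.sum_const, Finset.card_range, nsmul_eq_mul]
      _ ≤ dist f g := by
          rcases Nat.eq_zero_or_pos n with hn | hn
          · simp [hn, dist_nonneg]
          · rw [norm_inv, ← mul_assoc]
            have : ‖(n : ℂ)‖ = (n : ℝ) := by simp
            rw [this, inv_mul_cancel₀ (by positivity), one_mul]
  -- bound on integrals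
  have hintdist : ∀ f g : C(K, ℂ),
      dist (∫ k, f k ∂μ) (∫ k, g k ∂μ) ≤ dist f g := by
    intro f g
    rw [dist_eq_norm, ← integral_sub (hint f) (hint g)]
    calc ‖∫ k, (f k - g k) ∂μ‖ ≤ dist f g * (μ Set.univ).toReal := by
          apply norm_integral_le_of_norm_le_const
          filter_upwards with k
          rw [← dist_eq_norm]
          exact ContinuousMap.dist_apply_le_dist _
      _ = dist f g := by simp
  -- dense sequence in C(K, ℂ)
  obtain ⟨D, hD⟩ := TopologicalSpace.exists_dense_seq C(K, ℂ)
  -- the closed sets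
  set C : C(K, ℂ) → ℕ → ℕ → Set X := fun f i N =>
    {h | ∀ n, N ≤ n → dist (A f h n) (∫ k, f k ∂μ) ≤ 1 / (i + 1 : ℝ)} with hC
  have hCclosed : ∀ f i N, IsClosed (C f i N) := by
    intro f i N
    have : C f i N = ⋂ n, {h : X | N ≤ n → dist (A f h n) (∫ k, f k ∂μ) ≤ 1 / (i + 1 : ℝ)} := by
      ext h; simp [hC, Set.mem_iInter]
    rw [this]
    refine isClosed_iInter fun n => ?_
    by_cases hn : N ≤ n
    · simp only [hn, forall_true_left]
      exact isClosed_le (Continuous.dist (hAcont f n) continuous_const) continuous_const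
    · simp only [hn, false_implies]
      simpa using isClosed_univ
  -- Tendsto for f iff membership in ⋂ i ⋃ N, C f i N
  have hTiff : ∀ (f : C(K, ℂ)) (h : X),
      Tendsto (fun n => A f h n) atTop (nhds (∫ k, f k ∂μ)) ↔
        ∀ i, ∃ N, h ∈ C f i N := by
    intro f h
    rw [Metric.tendsto_atTop]
    constructor
    · intro ht i
      obtain ⟨N, hN⟩ := ht (1 / (i + 1 : ℝ)) (by positivity)
      exact ⟨N, fun n hn => (hN n hn).le⟩
    · intro ht ε hε
      obtain ⟨i, hi⟩ := exists_nat_one_div_lt hε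
      obtain ⟨N, hN⟩ := ht i
      exact ⟨N, fun n hn => lt_of_le_of_lt (hN n hn) hi⟩
  -- key: uniform distribution is detected by the dense sequence
  have hkey : ∀ h : X, UniformlyDistributed μ (fun n => h.1 (a n)) ↔
      ∀ k, Tendsto (fun n => A (D k) h n) atTop (nhds (∫ x, (D k) x ∂μ)) := by
    intro h
    constructor
    · intro hud k; exact hud (D k)
    · intro hd f
      rw [Metric.tendsto_atTop]
      intro ε hε
      obtain ⟨k, hk⟩ := hD.exists_dist_lt f (show (0:ℝ) < ε / 3 by positivity)
      obtain ⟨N, hN⟩ := Metric.tendsto_atTop.1 (hd k) (ε / 3) (by positivity)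
      refine ⟨N, fun n hn => ?_⟩
      calc dist (A f h n) (∫ k, f k ∂μ)
          ≤ dist (A f h n) (A (D k) h n) + dist (A (D k) h n) (∫ x, (D k) x ∂μ)
            + dist (∫ x, (D k) x ∂μ) (∫ k, f k ∂μ) := dist_triangle4 _ _ _ _
        _ < ε / 3 + ε / 3 + ε / 3 := by
            have h1 := (havg f (D k) h n).trans_lt hk
            have h2 := hN n hn
            have h3 := (hintdist (D k) f).trans_lt (by rwa [dist_comm] at hk)
            linarith
        _ = ε := by ring
  -- assemble the F_σδ structure
  let e : ℕ ≃ ℕ × ℕ := (Denumerable.eqv (ℕ × ℕ)).symm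
  refine ⟨fun m N => C (D (e m).1) (e m).2 N, fun m N => hCclosed _ _ _, ?_⟩
  ext h
  simp only [Set.mem_setOf_eq, Set.mem_iInter, Set.mem_iUnion]
  rw [hkey h]
  constructor
  · intro H m
    exact (hTiff (D (e m).1) h).1 (H (e m).1) (e m).2
  · intro H k
    rw [hTiff]
    intro i
    have := H (e.symm (k, i))
    rwa [Equiv.apply_symm_apply] at this
end
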